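/- Let α be a root of unity in ℂ with (α−1)² ∈ 2·ℤ̄ (where ℤ̄ is the ring of algebraic integers). Then α⁴ = 1. -/

import Mathlib

open IntermediateField Polynomial

lemma key_root_one (ζ : ℂ) (k : ℕ) (hk : 1 ≤ k) (hζk : ζ ^ k = 1)
    (γ : ℂ) (hγ : IsIntegral ℤ γ) (heq : ζ - 1 = 4 * γ) : ζ = 1 := by
  by_contra hne
  have hζint : IsIntegral ℚ ζ :=
    ⟨X ^ k - 1, monic_X_pow_sub_C 1 (by omega), by simp [hζk]⟩
  let K := ℚ⟮ζ⟯
  haveI : FiniteDimensional ℚ K := adjoin.finiteDimensional hζint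
  set d := Module.finrank ℚ K with hd
  have hd1 : 1 ≤ d := Module.finrank_pos
  let z : K := AdjoinSimple.gen ℚ ζ
  have hzc : (z : ℂ) = ζ := rfl
  have hzk : z ^ k = 1 := by
    apply Subtype.ext
    push_cast [hzc, hζk]
    rfl
  let g : K := (z - 1) / 4
  have hgval : (g : ℂ) = γ := by
    have h1 : (g : ℂ) = ((z : ℂ) - 1) / 4 := by
      show algebraMap K ℂ ((z - 1) / 4) = _
      rw [map_div₀, map_sub, map_one, map_ofNat]; rfl
    rw [h1, hzc, heq]; ring
  have hzg : z - 1 = 4 * g := by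
    show z - 1 = 4 * ((z - 1) / 4)
    field_simp
  have hgint : IsIntegral ℤ g := by
    rw [← isIntegral_algebraMap_iff (R := ℤ) (A := K) (B := ℂ)
      (algebraMap K ℂ).injective]
    show IsIntegral ℤ (g : ℂ)
    rw [hgval]; exact hγ
  have hgne : g ≠ 0 := by
    intro h0
    apply hne
    have h1 : (g : ℂ) = 0 := by rw [h0]; rfl
    rw [hgval] at h1
    rw [h1, mul_zero] at heq
    linear_combination heq
  have hNg : Algebra.norm ℚ g ≠ 0 := (Algebra.norm_ne_zero_iff).mpr hgne
  obtain ⟨n, hn⟩ := IsIntegrallyClosed.isIntegral_iff.mp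
    (Algebra.isIntegral_norm ℚ (L := K) hgint)
  have hnne : n ≠ 0 := by
    intro h0; apply hNg; rw [← hn, h0]; simp
  have habs : (1 : ℚ) ≤ |Algebra.norm ℚ g| := by
    rw [← hn, eq_intCast]
    have : (1 : ℤ) ≤ |n| := Int.one_le_abs (by omega)
    exact_mod_cast this
  have hnorm41 : Algebra.norm ℚ (z - 1) = 4 ^ d * Algebra.norm ℚ g := by
    rw [hzg, map_mul]
    congr 1
    have h4 : (4 : K) = algebraMap ℚ K 4 := by norm_num
    rw [h4, Algebra.norm_algebraMap]
  have hcard : Fintype.card (K →ₐ[ℚ] ℂ) = d := AlgHom.card ℚ K ℂ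
  have hbound : ‖algebraMap ℚ ℂ (Algebra.norm ℚ (z - 1))‖ ≤ 2 ^ d := by
    rw [Algebra.norm_eq_prod_embeddings, norm_prod]
    calc ∏ σ : K →ₐ[ℚ] ℂ, ‖σ (z - 1)‖
        ≤ ∏ _σ : K →ₐ[ℚ] ℂ, (2 : ℝ) := by
          apply Finset.prod_le_prod (fun _ _ => norm_nonneg _)
          intro σ _
          have hσz : (σ z) ^ k = 1 := by rw [← map_pow, hzk, map_one]
          have habs1 : ‖σ z‖ = 1 := by
            have h2 : ‖σ z‖ ^ k = 1 := by
              rw [← norm_pow, hσz, norm_one]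
            rcases (pow_eq_one_iff_cases.mp h2) with h | h | h
            · omega
            · exact h
            · exfalso; have := norm_nonneg (σ z); rw [h.1] at this; linarith
          calc ‖σ (z - 1)‖ = ‖σ z - 1‖ := by
                rw [map_sub, map_one]
            _ ≤ ‖σ z‖ + ‖(1 : ℂ)‖ := by
                simpa using norm_sub_le (σ z) 1
            _ ≤ 2 := by rw [habs1]; norm_num
      _ = 2 ^ d := by rw [Finset.prod_const, Finset.card_univ, hcard]
  have hlow : (4 : ℝ) ^ d ≤ ‖(algebraMap ℚ ℂ (Algebra.norm ℚ (z - 1)))‖ := by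
    have : (algebraMap ℚ ℂ (Algebra.norm ℚ (z - 1))) =
        ((((Algebra.norm ℚ (z - 1) : ℚ) : ℝ)) : ℂ) := by push_cast; rfl
    rw [this, Complex.norm_real, Real.norm_eq_abs, hnorm41]
    push_cast
    rw [abs_mul, abs_pow]
    have h2 : |(4:ℝ)| = 4 := by norm_num
    rw [h2]
    have : (1:ℝ) ≤ |((Algebra.norm ℚ g : ℚ) : ℝ)| := by exact_mod_cast habs
    nlinarith [pow_pos (by norm_num : (0:ℝ) < 4) d]
  have : (4:ℝ) ^ d < 4 ^ d := lt_of_le_of_lt (le_trans hlow hbound)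
    (pow_lt_pow_left₀ (by norm_num) (by norm_num) (by omega))
  exact lt_irrefl _ this

theorem stmt_15 (α : ℂ) (hord : ∃ k : ℕ, 1 ≤ k ∧ α ^ k = 1)
    (h : ∃ β : ℂ, IsIntegral ℤ β ∧ (α - 1) ^ 2 = 2 * β) :
    α ^ 4 = 1 := by
  obtain ⟨k, hk, hαk⟩ := hord
  obtain ⟨β, hβ, hβeq⟩ := h
  have hαint : IsIntegral ℤ α :=
    ⟨X ^ k - 1, monic_X_pow_sub_C 1 (by omega), by simp [hαk]⟩
  have hζk : (α ^ 4) ^ k = 1 := by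
    rw [← pow_mul, mul_comm, pow_mul, hαk, one_pow]
  set γ : ℂ := β + α - 1 with hγdef
  have hγint : IsIntegral ℤ γ := (hβ.add hαint).sub isIntegral_one
  have hγ'int : IsIntegral ℤ (γ + γ ^ 2) := hγint.add (hγint.pow 2)
  have heq : α ^ 4 - 1 = 4 * (γ + γ ^ 2) := by
    have hα2 : α ^ 2 = 1 + 2 * γ := by linear_combination hβeq
    linear_combination (α^2 + 1 + 2*γ) * hα2
  have := key_root_one (α ^ 4) k hk hζk (γ + γ ^ 2) hγ'int heq
  exact this
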